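/- For r, k ≥ 2 with r + k > 4 and any s > 0, there are only finitely many isomorphism classes of k-dense r-uniform hypergraphs H with ex(H) = s. -/

import Mathlib

/-- An `r`-uniform hypergraph: a finite vertex set and a finite set of edges,
each edge a set of `r` vertices. -/
structure RUniformHypergraph (r : ℕ) where
  verts : Finset ℕ
  edges : Finset (Finset ℕ)
  card_edge : ∀ e ∈ edges, e.card = r
  support : ∀ e ∈ edges, e ⊆ verts

/-- The degree of a vertex: the number of edges containing it. -/
def RUniformHypergraph.degree {r : ℕ} (H : RUniformHypergraph r) (v : ℕ) : ℕ :=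
  (H.edges.filter (fun e => v ∈ e)).card

/-- `H` is `k`-dense if every vertex has degree at least `k`. -/
def RUniformHypergraph.KDense {r : ℕ} (k : ℕ) (H : RUniformHypergraph r) : Prop :=
  ∀ v ∈ H.verts, k ≤ H.degree v

/-- The excess of a hypergraph: `(r-1)·e(H) - |H|`. -/
def RUniformHypergraph.excess {r : ℕ} (H : RUniformHypergraph r) : ℤ :=
  ((r : ℤ) - 1) * H.edges.card - H.verts.card

/-- Isomorphism of hypergraphs: a bijection of the vertices mapping vertex set
to vertex set and edges to edges. -/
def RUniformHypergraph.Iso {r : ℕ} (H H' : RUniformHypergraph r) : Prop :=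
  ∃ π : ℕ ≃ ℕ,
    H'.verts = H.verts.image π ∧
    H'.edges = H.edges.image (fun e => e.image π)

lemma RUniformHypergraph.sum_degree {r : ℕ} (H : RUniformHypergraph r) :
    ∑ v ∈ H.verts, H.degree v = H.edges.card * r := by
  classical
  simp only [RUniformHypergraph.degree, Finset.card_filter]
  rw [Finset.sum_comm]
  rw [Finset.sum_congr rfl (fun e he => ?_), Finset.sum_const, smul_eq_mul]
  rw [← Finset.card_filter]
  have h : H.verts.filter (fun v => v ∈ e) = e := by
    rw [Finset.filter_mem_eq_inter, Finset.inter_eq_right]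
    exact H.support e he
  rw [h, H.card_edge e he]

lemma exists_perm_to_range (A : Finset ℕ) :
    ∃ σ : ℕ ≃ ℕ, A.image σ = Finset.range A.card := by
  classical
  set n := A.card with hn
  have hAf : (↑A : Set ℕ).Finite := A.finite_toSet
  have hBf : (↑(Finset.range n) : Set ℕ).Finite := (Finset.range n).finite_toSet
  haveI iA : Infinite ↥(↑A : Set ℕ)ᶜ := Set.infinite_coe_iff.mpr hAf.infinite_compl
  haveI iB : Infinite ↥(↑(Finset.range n) : Set ℕ)ᶜ := Set.infinite_coe_iff.mpr hBf.infinite_compl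
  haveI dA : Denumerable ↥(↑A : Set ℕ)ᶜ := Nat.Subtype.denumerable _
  haveI dB : Denumerable ↥(↑(Finset.range n) : Set ℕ)ᶜ := Nat.Subtype.denumerable _
  have e1 : ↥(↑A : Set ℕ) ≃ ↥(↑(Finset.range n) : Set ℕ) :=
    Finset.equivOfCardEq (s := A) (t := Finset.range n) (by simp [hn])
  have e2 : ↥(↑A : Set ℕ)ᶜ ≃ ↥(↑(Finset.range n) : Set ℕ)ᶜ :=
    (Denumerable.eqv _).trans (Denumerable.eqv _).symm
  let σ : ℕ ≃ ℕ :=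
    (Equiv.Set.sumCompl (↑A : Set ℕ)).symm.trans
      ((e1.sumCongr e2).trans (Equiv.Set.sumCompl (↑(Finset.range n) : Set ℕ)))
  refine ⟨σ, Finset.eq_of_subset_of_card_le ?_ ?_⟩
  · intro b hb
    obtain ⟨a, ha, rfl⟩ := Finset.mem_image.mp hb
    have ha' : a ∈ (↑A : Set ℕ) := ha
    have h1 : (Equiv.Set.sumCompl (↑A : Set ℕ)).symm a = Sum.inl ⟨a, ha'⟩ := by
      rw [Equiv.symm_apply_eq, Equiv.Set.sumCompl_apply_inl]
    have h2 : σ a = ↑(e1 ⟨a, ha'⟩) := by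
      simp only [σ, Equiv.trans_apply, h1, Equiv.sumCongr_apply, Sum.map_inl,
        Equiv.Set.sumCompl_apply_inl]
    rw [h2]
    exact (e1 ⟨a, ha'⟩).2
  · rw [Finset.card_image_of_injective _ σ.injective, Finset.card_range]

/-- For `r, k ≥ 2` with `r + k > 4` and any `s > 0`, there are only finitely
many isomorphism classes of `k`-dense `r`-uniform hypergraphs of excess `s`. -/
theorem finitely_many_kdense_of_excess {r k : ℕ} (hr : 2 ≤ r) (hk : 2 ≤ k)
    (hrk : 4 < r + k) (s : ℤ) (hs : 0 < s) :
    ∃ S : Set (RUniformHypergraph r), S.Finite ∧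
      ∀ H : RUniformHypergraph r, H.KDense k → H.excess = s → ∃ H' ∈ S, H.Iso H' := by
  classical
  set N : ℕ := (r * s).toNat with hN
  refine ⟨{H' : RUniformHypergraph r | H'.verts ⊆ Finset.range N}, ?_, ?_⟩
  · have hinj : Set.InjOn (fun H' : RUniformHypergraph r => (H'.verts, H'.edges))
        {H' : RUniformHypergraph r | H'.verts ⊆ Finset.range N} := by
      rintro ⟨v1, e1, c1, s1⟩ _ ⟨v2, e2, c2, s2⟩ _ h
      simp only [Prod.mk.injEq] at h
      obtain ⟨h1, h2⟩ := h
      subst h1; subst h2; rfl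
    apply Set.Finite.of_finite_image ?_ hinj
    apply Set.Finite.subset
      (((Finset.range N).powerset ×ˢ (Finset.range N).powerset.powerset) : Finset _).finite_toSet
    rintro p ⟨H', hH', rfl⟩
    simp only [Finset.coe_product, Set.mem_prod, Finset.mem_coe, Finset.mem_powerset]
    exact ⟨hH', fun e he => Finset.mem_powerset.mpr ((H'.support e he).trans hH')⟩
  · intro H hd he
    -- vertex bound
    have hsum : k * H.verts.card ≤ H.edges.card * r := by
      calc k * H.verts.card = ∑ _v ∈ H.verts, k := by
            rw [Finset.sum_const, smul_eq_mul, mul_comm]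
        _ ≤ ∑ v ∈ H.verts, H.degree v := Finset.sum_le_sum hd
        _ = H.edges.card * r := H.sum_degree
    have hVN : H.verts.card ≤ N := by
      have hco : (2 : ℤ) ≤ ((k : ℤ) - 1) * ((r : ℤ) - 1) := by
        have hk' : (2 : ℤ) ≤ (k : ℤ) := by exact_mod_cast hk
        have hr' : (2 : ℤ) ≤ (r : ℤ) := by exact_mod_cast hr
        have hrk' : (5 : ℤ) ≤ (r : ℤ) + k := by exact_mod_cast hrk
        nlinarith
      have hE : ((r : ℤ) - 1) * H.edges.card = s + H.verts.card := by
        have := he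
        unfold RUniformHypergraph.excess at this
        linarith
      have hsum' : (k : ℤ) * H.verts.card ≤ H.edges.card * r := by exact_mod_cast hsum
      have hV0 : (0 : ℤ) ≤ (H.verts.card : ℤ) := Int.ofNat_nonneg _
      have hr1 : (0 : ℤ) ≤ (r : ℤ) - 1 := by
        have : (2 : ℤ) ≤ (r : ℤ) := by exact_mod_cast hr
        linarith
      have key : (H.verts.card : ℤ) ≤ (r : ℤ) * s := by nlinarith
      have : (H.verts.card : ℤ) ≤ ((r * s).toNat : ℤ) := by
        rwa [Int.toNat_of_nonneg (by positivity)]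
      exact_mod_cast this
    obtain ⟨σ, hσ⟩ := exists_perm_to_range H.verts
    refine ⟨⟨H.verts.image σ, H.edges.image (fun e => e.image σ), ?_, ?_⟩, ?_, σ, rfl, rfl⟩
    · intro e' he'
      obtain ⟨e, heE, rfl⟩ := Finset.mem_image.mp he'
      rw [Finset.card_image_of_injective _ σ.injective]
      exact H.card_edge e heE
    · intro e' he'
      obtain ⟨e, heE, rfl⟩ := Finset.mem_image.mp he'
      exact Finset.image_subset_image (H.support e heE)
    · simp only [Set.mem_setOf_eq]
      rw [hσ]
      exact Finset.range_subset_range.mpr hVN
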